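/- Let S be a complete lattice and Q(S) the quantale of join-preserving endomorphisms of S under composition and pointwise joins. For x ∈ S define ρ_x(y) = x if y ≠ 0, ρ_x(0) = 0, and λ_x(y) = 1 if y ≰ x, λ_x(y) = 0 if y ≤ x. Then the right-sided elements of Q(S) are exactly the maps ρ_x and the left-sided elements are exactly the maps λ_x; moreover ρ_x^⊥ = λ_x and λ_x^⊥ = ρ_x, where α^⊥ = ⋁{β : α∘β = 0} for right-sided α and ⋁{β : β∘α = 0} for left-sided α; hence Q(S) is a von Neumann quantale. -/

import Mathlib

/-- A quantale: a complete lattice with an associative multiplication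
distributing over arbitrary joins in both variables. -/
class Quantale' (α : Type*) extends CompleteLattice α, Mul α where
  mul_assoc : ∀ a b c : α, a * b * c = a * (b * c)
  mul_sSup : ∀ (a : α) (s : Set α), a * sSup s = ⨆ b ∈ s, a * b
  sSup_mul : ∀ (s : Set α) (a : α), sSup s * a = ⨆ b ∈ s, b * a

section QS
variable {S : Type*} [CompleteLattice S]

/-- Pointwise suprema of join-preserving endomaps. -/
noncomputable instance sSupHom.instSupSetEnd : SupSet (sSupHom S S) :=
  ⟨fun s => ⟨fun x => ⨆ f ∈ s, f x, by
    intro A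
    rw [sSup_image]
    simp only [map_sSup, sSup_image]
    exact iSup₂_comm _⟩⟩

theorem sSupHom.sSup_apply' (s : Set (sSupHom S S)) (x : S) :
    sSup s x = ⨆ f ∈ s, f x := rfl

/-- `Q(S)`: the complete lattice of join-preserving endomaps of `S`. -/
noncomputable instance sSupHom.instCompleteLatticeEnd : CompleteLattice (sSupHom S S) :=
  completeLatticeOfSup _ fun s => by
    constructor
    · intro f hf x
      exact le_biSup (fun g : sSupHom S S => g x) hf
    · intro g hg x
      exact iSup₂_le fun f hf => hg hf x

/-- The endomorphism quantale `Q(S)`, with composition as multiplication. -/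
noncomputable instance sSupHom.instQuantaleEnd : Quantale' (sSupHom S S) where
  __ := sSupHom.instCompleteLatticeEnd
  mul := fun f g => f.comp g
  mul_assoc := fun _ _ _ => rfl
  mul_sSup := by
    intro a s
    apply DFunLike.ext
    intro x
    rw [← sSup_image, sSupHom.sSup_apply', iSup_image]
    show a ((sSup s) x) = _
    rw [sSupHom.sSup_apply' s x, map_iSup₂]
    rfl
  sSup_mul := by
    intro s a
    apply DFunLike.ext
    intro x
    rw [← sSup_image, sSupHom.sSup_apply', iSup_image]
    show (sSup s) (a x) = _
    rw [sSupHom.sSup_apply' s (a x)]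
    rfl

open Classical in
/-- The right-sided element `ρ_x` of `Q(S)`. -/
noncomputable def rho (x : S) : sSupHom S S :=
  ⟨fun y => if y = ⊥ then ⊥ else x, by
    intro A
    rw [sSup_image]
    show (if sSup A = ⊥ then ⊥ else x) = _
    rcases eq_or_ne (sSup A) ⊥ with h | h
    · rw [h, if_pos rfl]

      refine (le_bot_iff.mp (iSup₂_le fun y hy => ?_)).symm
      have hy' : y = ⊥ := le_bot_iff.mp ((le_sSup hy).trans_eq h)
      simp [hy']
    · rw [if_neg h]
      refine le_antisymm ?_ (iSup₂_le fun y hy => ?_)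
      · obtain ⟨a, ha, hab⟩ : ∃ a ∈ A, a ≠ ⊥ := by
          by_contra hc
          push_neg at hc
          exact h (sSup_eq_bot.mpr hc)
        have hx : x = if a = ⊥ then ⊥ else x := by simp [hab]
        exact hx.le.trans (le_biSup (fun y => if y = ⊥ then ⊥ else x) ha)
      · split
        · exact bot_le
        · exact le_rfl⟩

open Classical in
/-- The left-sided element `λ_x` of `Q(S)`. -/
noncomputable def lam (x : S) : sSupHom S S :=
  ⟨fun y => if y ≤ x then ⊥ else ⊤, by
    intro A
    rw [sSup_image]
    show (if sSup A ≤ x then ⊥ else ⊤) = _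
    by_cases h : sSup A ≤ x
    · rw [if_pos h]
      refine (le_bot_iff.mp (iSup₂_le fun y hy => ?_)).symm
      rw [if_pos ((le_sSup hy).trans h)]
    · rw [if_neg h]
      obtain ⟨a, ha, hax⟩ : ∃ a ∈ A, ¬ a ≤ x := by
        by_contra hc
        push_neg at hc
        exact h (sSup_le hc)
      refine le_antisymm ?_ le_top
      have ht : (⊤ : S) = if a ≤ x then ⊥ else ⊤ := by simp [hax]
      exact ht.le.trans (le_biSup (fun y => if y ≤ x then ⊥ else ⊤) ha)⟩

/-- The right adjoint of a join-preserving map. -/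
noncomputable def adj (α : sSupHom S S) (x : S) : S := sSup {y | α y ≤ x}

end QS


section helpers
variable {S : Type*} [CompleteLattice S]

lemma qs_mul_apply (α β : sSupHom S S) (y : S) : (α * β) y = α (β y) := rfl

lemma rho_apply_bot (x : S) : rho x ⊥ = ⊥ := if_pos rfl

lemma rho_apply_ne (x : S) {y : S} (h : y ≠ ⊥) : rho x y = x := if_neg h

lemma lam_apply_le (x : S) {y : S} (h : y ≤ x) : lam x y = ⊥ := if_pos h

lemma lam_apply_not_le (x : S) {y : S} (h : ¬ y ≤ x) : lam x y = ⊤ := if_neg h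

lemma rho_le_self (x y : S) : rho x y ≤ x := by
  rcases eq_or_ne y ⊥ with h | h
  · rw [h, rho_apply_bot]; exact bot_le
  · rw [rho_apply_ne x h]

lemma qs_bot_eq : (⊥ : sSupHom S S) = lam ⊤ :=
  le_antisymm bot_le (fun y => by dsimp only; rw [lam_apply_le ⊤ le_top]; exact bot_le)

lemma qs_bot_apply (y : S) : (⊥ : sSupHom S S) y = ⊥ := by
  rw [qs_bot_eq]; exact lam_apply_le ⊤ le_top

lemma qs_top_eq : (⊤ : sSupHom S S) = rho ⊤ := by
  refine le_antisymm (fun y => ?_) le_top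
  dsimp only
  rcases eq_or_ne y ⊥ with h | h
  · rw [h, map_bot, rho_apply_bot]
  · rw [rho_apply_ne ⊤ h]; exact le_top

lemma lam_mul_rho (x : S) : lam x * rho x = ⊥ := by
  refine DFunLike.ext _ _ fun y => ?_
  rw [qs_bot_apply, qs_mul_apply]
  exact lam_apply_le x (rho_le_self x y)

lemma ann_rho (x : S) : sSup {β : sSupHom S S | β * rho x = ⊥} = lam x := by
  refine le_antisymm (sSup_le fun β hβ y => ?_) (le_sSup (lam_mul_rho x))
  dsimp only
  have hbx : β x = ⊥ := by
    rcases eq_or_ne (⊤ : S) ⊥ with ht | ht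
    · have hx : x = ⊥ := le_bot_iff.mp (le_top.trans ht.le)
      rw [hx, map_bot]
    · calc β x = (β * rho x) ⊤ := by rw [qs_mul_apply, rho_apply_ne x ht]
        _ = ⊥ := by rw [hβ, qs_bot_apply]
  by_cases hy : y ≤ x
  · rw [lam_apply_le x hy]
    exact (OrderHomClass.mono β hy).trans hbx.le
  · rw [lam_apply_not_le x hy]; exact le_top

lemma ann_lam (x : S) : sSup {β : sSupHom S S | lam x * β = ⊥} = rho x := by
  refine le_antisymm (sSup_le fun β hβ y => ?_) (le_sSup (lam_mul_rho x))
  dsimp only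
  have hb : ∀ z, β z ≤ x := by
    intro z
    by_contra hc
    have h1 : (⊥ : S) = ⊤ := by
      calc (⊥ : S) = (lam x * β) z := by rw [hβ, qs_bot_apply]
        _ = ⊤ := by rw [qs_mul_apply, lam_apply_not_le x hc]
    exact hc (le_top.trans (h1.symm.le.trans bot_le))
  rcases eq_or_ne y ⊥ with h | h
  · rw [h, map_bot, rho_apply_bot]
  · rw [rho_apply_ne x h]; exact hb y

lemma rs_iff (α : sSupHom S S) : α * ⊤ ≤ α ↔ ∃ x : S, α = rho x := by
  constructor
  · intro h
    refine ⟨α ⊤, DFunLike.ext _ _ fun y => ?_⟩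
    rcases eq_or_ne y ⊥ with hy | hy
    · rw [hy, map_bot, rho_apply_bot]
    · rw [rho_apply_ne _ hy]
      refine le_antisymm (OrderHomClass.mono α le_top) ?_
      have h2 : (⊤ : sSupHom S S) y = ⊤ := by rw [qs_top_eq, rho_apply_ne ⊤ hy]
      have h3 := h y
      dsimp only at h3
      rwa [qs_mul_apply, h2] at h3
  · rintro ⟨x, rfl⟩ y
    dsimp only
    rw [qs_mul_apply]
    rcases eq_or_ne y ⊥ with hy | hy
    · rw [hy, map_bot]
    · rw [rho_apply_ne x hy]; exact rho_le_self x _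
 
lemma ls_iff (α : sSupHom S S) : ⊤ * α ≤ α ↔ ∃ x : S, α = lam x := by
  constructor
  · intro h
    refine ⟨sSup {y | α y = ⊥}, DFunLike.ext _ _ fun y => ?_⟩
    set x := sSup {y | α y = ⊥} with hxdef
    have hax : α x = ⊥ := by
      rw [hxdef, map_sSup, sSup_image]
      exact le_bot_iff.mp (iSup₂_le fun z hz => hz.le)
    by_cases hy : y ≤ x
    · rw [lam_apply_le x hy]
      exact le_bot_iff.mp ((OrderHomClass.mono α hy).trans hax.le)
    · rw [lam_apply_not_le x hy]
      have hne : α y ≠ ⊥ := fun hb => hy (le_sSup hb)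
      have h3 := h y
      dsimp only at h3
      rw [qs_mul_apply, qs_top_eq, rho_apply_ne ⊤ hne] at h3
      exact top_le_iff.mp h3
  · rintro ⟨x, rfl⟩ y
    dsimp only
    rw [qs_mul_apply]
    by_cases hy : y ≤ x
    · rw [lam_apply_le x hy, map_bot]
    · exact le_top.trans (lam_apply_not_le x hy).ge

end helpers

/-- The right-sided elements of `Q(S)` are exactly the `ρ_x`, the left-sided
elements are exactly the `λ_x`, the annulator duality exchanges them
(`ρ_x^⊥ = λ_x`, `λ_x^⊥ = ρ_x`), and hence `Q(S)` is a von Neumann quantale. -/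
theorem stmt12 {S : Type*} [CompleteLattice S] :
    (∀ α : sSupHom S S, α * ⊤ ≤ α ↔ ∃ x : S, α = rho x) ∧
    (∀ α : sSupHom S S, ⊤ * α ≤ α ↔ ∃ x : S, α = lam x) ∧
    (∀ x : S, sSup {β : sSupHom S S | β * rho x = ⊥} = lam x) ∧
    (∀ x : S, sSup {β : sSupHom S S | lam x * β = ⊥} = rho x) ∧
    (∀ α : sSupHom S S, α * ⊤ ≤ α →
      sSup {γ : sSupHom S S | sSup {β : sSupHom S S | β * α = ⊥} * γ = ⊥} = α) ∧
    (∀ α : sSupHom S S, ⊤ * α ≤ α →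
      sSup {β : sSupHom S S | β * sSup {γ : sSupHom S S | α * γ = ⊥} = ⊥} = α) := by
  refine ⟨rs_iff, ls_iff, ann_rho, ann_lam, fun α h => ?_, fun α h => ?_⟩
  · obtain ⟨x, rfl⟩ := (rs_iff α).mp h
    rw [ann_rho, ann_lam]
  · obtain ⟨x, rfl⟩ := (ls_iff α).mp h
    rw [ann_lam, ann_rho]
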